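/- arXiv:1406.5060 — 2 statements merged into one kernel-verified Lean document; each statement's English description precedes it below -/
import Mathlib

section
/- Let q be a prime power, N ≥ 3 an integer, A a finite cap in PG(N,q), S a finite set of points of PG(N,q) with S ∩ A = ∅, p ∈ [0,1], and let B be a p-random subset of S. Let v be a point of PG(N,q) with v ∉ A such that no two distinct points of A are collinear with v. Then the probability of the event [v ∈ B, or there exist distinct points w₁, w₂ ∈ A ∪ B, both different from v, such that v, w₁, w₂ are collinear] is at most p + p·|A_S(v)| + p²·|T_S(v)|. -/
open Projectivization MeasureTheory

/-- Three points of a projective space are collinear if their representative vectors span a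
linear subspace of dimension at most `2`. -/
def Collin3 {F : Type*} [Field F] {V : Type*} [AddCommGroup V] [Module F V]
    (x y z : Projectivization F V) : Prop :=
  Module.finrank F ↥(x.submodule ⊔ y.submodule ⊔ z.submodule) ≤ 2

/-- A cap is a set of points no three of which are pairwise distinct and collinear. -/
def IsCap {F : Type*} [Field F] {V : Type*} [AddCommGroup V] [Module F V]
    (A : Set (Projectivization F V)) : Prop :=
  ∀ x ∈ A, ∀ y ∈ A, ∀ z ∈ A, x ≠ y → x ≠ z → y ≠ z → ¬ Collin3 x y z

/-- The Bernoulli measure with parameter `p` on `Bool` (for `p ∈ [0,1]`). -/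
noncomputable def bernoulliMeasure (p : ℝ) : Measure Bool :=
  (PMF.bernoulli (min (Real.toNNReal p) 1) (min_le_right _ _)).toMeasure

/-- The law of a `p`-random subset of the finite set `S`: every element of `S` is included
independently with probability `p`. -/
noncomputable def nibbleMeasure {α : Type*} (S : Finset α) (p : ℝ) :
    Measure (↥S → Bool) :=
  Measure.pi fun _ => bernoulliMeasure p

/-- The random subset of `S` corresponding to the sample `ω`. -/
def chosenSet {α : Type*} (S : Finset α) (ω : ↥S → Bool) : Set α :=
  {x | ∃ h : x ∈ S, ω ⟨x, h⟩ = true}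

/-- `A_S(v)`: the points of `S \ {v}` collinear with `v` and some point of `A`. -/
def capCone {F : Type*} [Field F] {V : Type*} [AddCommGroup V] [Module F V]
    (A : Set (Projectivization F V)) (S : Finset (Projectivization F V))
    (v : Projectivization F V) : Set (Projectivization F V) :=
  {x | x ∈ S ∧ x ≠ v ∧ ∃ u ∈ A, v ≠ x ∧ v ≠ u ∧ x ≠ u ∧ Collin3 v x u}

/-- `T_S(v)`: the unordered pairs of distinct points of `S \ {v}` collinear with `v`. -/
def pairCone {F : Type*} [Field F] {V : Type*} [AddCommGroup V] [Module F V]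
    (S : Finset (Projectivization F V)) (v : Projectivization F V) :
    Set (Sym2 (Projectivization F V)) :=
  {s | ∃ x y, s = s(x, y) ∧ x ≠ y ∧ x ∈ S ∧ x ≠ v ∧ y ∈ S ∧ y ≠ v ∧ Collin3 v x y}

instance bernoulliMeasure.isProb (p : ℝ) : IsProbabilityMeasure (bernoulliMeasure p) := by
  unfold bernoulliMeasure; infer_instance

lemma bern_true (p : ℝ) (hp1 : p ≤ 1) : bernoulliMeasure p {true} = ENNReal.ofReal p := by
  unfold bernoulliMeasure
  rw [PMF.toMeasure_apply_singleton _ _ (measurableSet_singleton _)]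
  simp [PMF.bernoulli_apply, min_eq_left (Real.toNNReal_le_one.mpr hp1)]
  rfl

lemma cyl_one {α : Type*} (S : Finset α) (p : ℝ) (hp1 : p ≤ 1) (i : ↥S) :
    nibbleMeasure S p {ω | ω i = true} = ENNReal.ofReal p := by
  classical
  have h : {ω : ↥S → Bool | ω i = true} =
      Set.pi Set.univ (fun j => if j = i then {true} else Set.univ) := by
    ext ω
    simp only [Set.mem_setOf_eq, Set.mem_pi, Set.mem_univ, true_implies]
    constructor
    · intro h j; by_cases hj : j = i <;> simp [hj, h]
    · intro h; have := h i; simpa using this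
  rw [nibbleMeasure, h, Measure.pi_pi]
  have : ∀ j : ↥S, bernoulliMeasure p (if j = i then {true} else Set.univ)
      = if j = i then ENNReal.ofReal p else 1 := by
    intro j; by_cases hj : j = i
    · simp [hj, bern_true p hp1]
    · simp only [hj, if_false]; exact measure_univ
  simp_rw [this]
  simp [Finset.prod_ite_eq']

lemma cyl_two {α : Type*} (S : Finset α) (p : ℝ) (hp1 : p ≤ 1) (i j : ↥S) (hij : i ≠ j) :
    nibbleMeasure S p {ω | ω i = true ∧ ω j = true} = ENNReal.ofReal p ^ 2 := by
  classical
  have h : {ω : ↥S → Bool | ω i = true ∧ ω j = true} =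
      Set.pi Set.univ (fun k => if k = i ∨ k = j then {true} else Set.univ) := by
    ext ω
    simp only [Set.mem_setOf_eq, Set.mem_pi, Set.mem_univ, true_implies]
    constructor
    · rintro ⟨h1, h2⟩ k
      by_cases hk : k = i ∨ k = j
      · rcases hk with rfl | rfl <;> simp [h1, h2]
      · simp [hk]
    · intro h
      constructor
      · have := h i; simpa using this
      · have := h j; simpa using this
  rw [nibbleMeasure, h, Measure.pi_pi]
  have key : ∀ k : ↥S, bernoulliMeasure p (if k = i ∨ k = j then {true} else Set.univ)
      = (if k = i then ENNReal.ofReal p else 1) * (if k = j then ENNReal.ofReal p else 1) := by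
    intro k
    by_cases h1 : k = i
    · subst h1; simp [hij, bern_true p hp1]
    · by_cases h2 : k = j
      · subst h2; simp [h1, Ne.symm hij, bern_true p hp1]
      · simp only [h1, h2, or_self, if_false, one_mul]; exact measure_univ
  simp_rw [key, Finset.prod_mul_distrib]
  simp [Finset.prod_ite_eq', sq]

lemma chosen_event {α : Type*} (S : Finset α) {x : α} (hx : x ∈ S) :
    {ω : ↥S → Bool | x ∈ chosenSet S ω} = {ω | ω ⟨x, hx⟩ = true} := by
  ext ω
  simp only [Set.mem_setOf_eq, chosenSet]
  exact ⟨fun ⟨_, e⟩ => e, fun e => ⟨hx, e⟩⟩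

lemma Collin3.swap13 {F : Type*} [Field F] {V : Type*} [AddCommGroup V] [Module F V]
    {x y z : Projectivization F V} (h : Collin3 x y z) : Collin3 x z y := by
  unfold Collin3 at *
  rwa [sup_right_comm]

/-- Upper bound for the probability that a point `v`, not covered by the cap `A`, either is
chosen in the nibble `B` or lies on a bisecant of `A ∪ B`. -/
theorem deletion_probability_upper_bound
    (F : Type) [Field F] [Fintype F] (N : ℕ) (hN : 3 ≤ N)
    (A : Finset (Projectivization F (Fin (N + 1) → F)))
    (hA : IsCap (A : Set (Projectivization F (Fin (N + 1) → F))))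
    (S : Finset (Projectivization F (Fin (N + 1) → F)))
    (hSA : (S : Set (Projectivization F (Fin (N + 1) → F))) ∩ A = ∅)
    (p : ℝ) (hp0 : 0 ≤ p) (hp1 : p ≤ 1)
    (v : Projectivization F (Fin (N + 1) → F)) (hvA : v ∉ A)
    (hv : ∀ w₁ ∈ A, ∀ w₂ ∈ A, w₁ ≠ w₂ → ¬ Collin3 v w₁ w₂) :
    nibbleMeasure S p
      {ω | v ∈ chosenSet S ω ∨
        ∃ w₁ w₂, (w₁ ∈ (A : Set _) ∪ chosenSet S ω) ∧ (w₂ ∈ (A : Set _) ∪ chosenSet S ω) ∧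
          w₁ ≠ w₂ ∧ w₁ ≠ v ∧ w₂ ≠ v ∧ Collin3 v w₁ w₂} ≤
    ENNReal.ofReal (p + p * ((capCone (A : Set _) S v).ncard : ℝ) +
      p ^ 2 * ((pairCone S v).ncard : ℝ)) := by
  classical
  set μ := nibbleMeasure S p with hμ
  -- finiteness of the cones
  have hcapfin : (capCone (A : Set _) S v).Finite :=
    Set.Finite.subset S.finite_toSet fun x hx => hx.1
  have hpairfin : (pairCone S v).Finite := by
    refine Set.Finite.subset ((S.finite_toSet.prod S.finite_toSet).image (fun q : _ × _ => s(q.1, q.2))) ?_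
    rintro s ⟨x, y, rfl, _, hxS, _, hyS, _, _⟩
    exact ⟨(x, y), ⟨hxS, hyS⟩, rfl⟩
  set capF := hcapfin.toFinset with hcapF
  set pairF := hpairfin.toFinset with hpairF
  -- events
  set Ev : Set (↥S → Bool) := {ω | v ∈ chosenSet S ω} with hEv
  set C : Projectivization F (Fin (N + 1) → F) → Set (↥S → Bool) :=
    fun x => {ω | x ∈ chosenSet S ω} with hC
  set D : Sym2 (Projectivization F (Fin (N + 1) → F)) → Set (↥S → Bool) :=
    fun s => {ω | ∀ x ∈ s, x ∈ chosenSet S ω} with hD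
  -- inclusion
  have hsub : {ω | v ∈ chosenSet S ω ∨
        ∃ w₁ w₂, (w₁ ∈ (A : Set _) ∪ chosenSet S ω) ∧ (w₂ ∈ (A : Set _) ∪ chosenSet S ω) ∧
          w₁ ≠ w₂ ∧ w₁ ≠ v ∧ w₂ ≠ v ∧ Collin3 v w₁ w₂} ⊆
      Ev ∪ ((⋃ x ∈ capF, C x) ∪ (⋃ s ∈ pairF, D s)) := by
    rintro ω (h | ⟨w₁, w₂, h1, h2, hne, h1v, h2v, hcol⟩)
    · exact Or.inl h
    right
    have hmemS : ∀ {w}, w ∈ chosenSet S ω → w ∈ S := fun h => h.1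
    rcases h1 with hA1 | hB1
    · rcases h2 with hA2 | hB2
      · exact absurd hcol (hv _ hA1 _ hA2 hne)
      · -- w₂ ∈ capCone
        left
        refine Set.mem_iUnion₂.mpr ⟨w₂, ?_, hB2⟩
        rw [hcapF, Set.Finite.mem_toFinset]
        exact ⟨hmemS hB2, h2v, w₁, hA1, Ne.symm h2v, Ne.symm h1v, Ne.symm hne,
          hcol.swap13⟩
    · rcases h2 with hA2 | hB2
      · left
        refine Set.mem_iUnion₂.mpr ⟨w₁, ?_, hB1⟩
        rw [hcapF, Set.Finite.mem_toFinset]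
        exact ⟨hmemS hB1, h1v, w₂, hA2, Ne.symm h1v, Ne.symm h2v, hne, hcol⟩
      · right
        refine Set.mem_iUnion₂.mpr ⟨s(w₁, w₂), ?_, ?_⟩
        · rw [hpairF, Set.Finite.mem_toFinset]
          exact ⟨w₁, w₂, rfl, hne, hmemS hB1, h1v, hmemS hB2, h2v, hcol⟩
        · intro x hx
          rcases Sym2.mem_iff.mp hx with rfl | rfl
          exacts [hB1, hB2]
  -- measure bounds
  have hEvB : μ Ev ≤ ENNReal.ofReal p := by
    by_cases hvS : v ∈ S
    · rw [hEv, chosen_event S hvS, hμ, cyl_one S p hp1]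
    · have : Ev = ∅ := by
        rw [hEv]; ext ω; simp only [Set.mem_setOf_eq, Set.mem_empty_iff_false, iff_false]
        rintro ⟨h, _⟩; exact hvS h
      simp [this]
  have hCB : ∀ x ∈ capF, μ (C x) = ENNReal.ofReal p := by
    intro x hx
    rw [hcapF, Set.Finite.mem_toFinset] at hx
    rw [hC, hμ]
    simp only
    rw [chosen_event S hx.1, cyl_one S p hp1]
  have hDB : ∀ s ∈ pairF, μ (D s) = ENNReal.ofReal p ^ 2 := by
    intro s hs
    rw [hpairF, Set.Finite.mem_toFinset] at hs
    obtain ⟨x, y, rfl, hxy, hxS, _, hyS, _, _⟩ := hs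
    have hDeq : D s(x, y) = {ω | ω ⟨x, hxS⟩ = true ∧ ω ⟨y, hyS⟩ = true} := by
      ext ω
      simp only [hD, Set.mem_setOf_eq, Sym2.mem_iff]
      constructor
      · intro h
        obtain ⟨_, e1⟩ := h x (Or.inl rfl)
        obtain ⟨_, e2⟩ := h y (Or.inr rfl)
        exact ⟨e1, e2⟩
      · rintro ⟨e1, e2⟩ z (rfl | rfl)
        exacts [⟨hxS, e1⟩, ⟨hyS, e2⟩]
    rw [hDeq, hμ, cyl_two S p hp1 _ _ (by simp [Subtype.ext_iff, hxy])]
  calc μ _ ≤ μ (Ev ∪ ((⋃ x ∈ capF, C x) ∪ (⋃ s ∈ pairF, D s))) := measure_mono hsub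
    _ ≤ μ Ev + μ ((⋃ x ∈ capF, C x) ∪ (⋃ s ∈ pairF, D s)) := measure_union_le _ _
    _ ≤ μ Ev + (μ (⋃ x ∈ capF, C x) + μ (⋃ s ∈ pairF, D s)) := by
        gcongr; exact measure_union_le _ _
    _ ≤ μ Ev + ((∑ x ∈ capF, μ (C x)) + ∑ s ∈ pairF, μ (D s)) := by
        gcongr <;> exact measure_biUnion_finset_le _ _
    _ ≤ ENNReal.ofReal p + ((capF.card : ENNReal) * ENNReal.ofReal p
          + (pairF.card : ENNReal) * ENNReal.ofReal p ^ 2) := by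
        gcongr
        · rw [Finset.sum_congr rfl hCB, Finset.sum_const, nsmul_eq_mul]
        · rw [Finset.sum_congr rfl hDB, Finset.sum_const, nsmul_eq_mul]
    _ = ENNReal.ofReal (p + p * ((capCone (A : Set _) S v).ncard : ℝ) +
          p ^ 2 * ((pairCone S v).ncard : ℝ)) := by
        have h1 : (capCone (A : Set _) S v).ncard = capF.card :=
          Set.ncard_eq_toFinset_card _ hcapfin
        have h2 : (pairCone S v).ncard = pairF.card :=
          Set.ncard_eq_toFinset_card _ hpairfin
        rw [h1, h2,
          ENNReal.ofReal_add (by positivity) (by positivity),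
          ENNReal.ofReal_add hp0 (by positivity),
          ENNReal.ofReal_mul hp0, ENNReal.ofReal_mul (by positivity),
          ENNReal.ofReal_pow hp0, ENNReal.ofReal_natCast, ENNReal.ofReal_natCast]
        ring
end

section
/- Fix an integer N ≥ 3. There exists M such that for every real number q ≥ M the following holds. Set θ = (log q)^{-2} and L = ⌈√(6N) · (log q)^{5/2}⌉. Let (P^ℓ_i)_{1 ≤ i ≤ L} and (P^u_i)_{1 ≤ i ≤ L} be real numbers with 0 ≤ P^ℓ_i ≤ P^u_i < 1, P^ℓ_i ≥ (1/2)·i·θ², and P^u_i ≤ 2·i·θ² for all 1 ≤ i ≤ L. Define b_0 = 1 and b_i = ∏_{j=1}^{i} (1 − P^u_j) for 1 ≤ i ≤ L. Then there exists an index K with 1 ≤ K ≤ L such that b_K ≤ q^{−(N+1)/2} · (log q)^{300} < b_{K−1}, and any such K satisfies √(N/6) · (log q)^{5/2} < K < √(6N) · (log q)^{5/2}. -/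
set_option maxHeartbeats 1000000

/-- `θ = (log q)^{-2}`. -/
noncomputable def nibbleTheta (q : ℝ) : ℝ := (Real.log q ^ 2)⁻¹

/-- `L = ⌈√(6N) (log q)^{5/2}⌉`. -/
noncomputable def nibbleL (N : ℕ) (q : ℝ) : ℕ :=
  ⌈Real.sqrt (6 * N) * Real.log q ^ ((5 : ℝ) / 2)⌉₊

/-- `b_i = ∏_{j=1}^{i} (1 - Pu j)` (so `b_0 = 1`). -/
noncomputable def nibbleB (Pu : ℕ → ℝ) (i : ℕ) : ℝ :=
  ∏ j ∈ Finset.Icc 1 i, (1 - Pu j)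

/-- The stopping threshold `q^{-(N+1)/2} (log q)^{300}`. -/
noncomputable def nibbleThr (N : ℕ) (q : ℝ) : ℝ :=
  q ^ (-(((N : ℝ) + 1) / 2)) * Real.log q ^ (300 : ℕ)

private lemma gauss_Icc (i : ℕ) : (∑ j ∈ Finset.Icc 1 i, (j:ℝ)) = i*(i+1)/2 := by
  induction i with
  | zero => simp
  | succ n ih =>
    rw [Finset.sum_Icc_succ_top (Nat.one_le_iff_ne_zero.mpr (Nat.succ_ne_zero n))]
    push_cast
    rw [ih]; ring

private lemma exp_neg_two_le (x : ℝ) (h0 : 0 ≤ x) (h2 : x ≤ 1/2) :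
    Real.exp (-(2*x)) ≤ 1 - x := by
  have hx : 0 < 1 - x := by linarith
  have h1 : 1/(1-x) ≤ Real.exp (2*x) := by
    have hd : x/(1-x) ≤ 2*x := by
      rw [div_le_iff₀ hx]; nlinarith
    calc 1/(1-x) = x/(1-x) + 1 := by field_simp; ring
    _ ≤ 2*x + 1 := by linarith
    _ ≤ Real.exp (2*x) := Real.add_one_le_exp _
  rw [Real.exp_neg]
  rw [show (1:ℝ) - x = (1/(1-x))⁻¹ by field_simp]
  exact inv_anti₀ (by positivity) h1

private lemma nibble_key (N : ℕ) (hN : 3 ≤ N) (ℓ : ℝ) (Pl Pu : ℕ → ℝ)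
    (h1 : 1 ≤ ℓ) (h2 : 300 * Real.log ℓ + 1 < ℓ)
    (h4 : 4 * (Real.sqrt (6 * (N:ℝ)) * ℓ ^ ((5:ℝ)/2) + 1) ≤ ℓ ^ 4)
    (hP : ∀ i : ℕ, 1 ≤ i → i ≤ ⌈Real.sqrt (6 * (N:ℝ)) * ℓ ^ ((5:ℝ)/2)⌉₊ →
      0 ≤ Pl i ∧ Pl i ≤ Pu i ∧ Pu i < 1 ∧
      1 / 2 * (i:ℝ) * (ℓ ^ 4)⁻¹ ≤ Pl i ∧ Pu i ≤ 2 * (i:ℝ) * (ℓ ^ 4)⁻¹) :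
    (∃ K : ℕ, 1 ≤ K ∧ K ≤ ⌈Real.sqrt (6 * (N:ℝ)) * ℓ ^ ((5:ℝ)/2)⌉₊ ∧
      nibbleB Pu K ≤ Real.exp (ℓ * (-(((N:ℝ) + 1) / 2)) + 300 * Real.log ℓ) ∧
      Real.exp (ℓ * (-(((N:ℝ) + 1) / 2)) + 300 * Real.log ℓ) < nibbleB Pu (K - 1)) ∧
    (∀ K : ℕ, 1 ≤ K → K ≤ ⌈Real.sqrt (6 * (N:ℝ)) * ℓ ^ ((5:ℝ)/2)⌉₊ →
      nibbleB Pu K ≤ Real.exp (ℓ * (-(((N:ℝ) + 1) / 2)) + 300 * Real.log ℓ) →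
      Real.exp (ℓ * (-(((N:ℝ) + 1) / 2)) + 300 * Real.log ℓ) < nibbleB Pu (K - 1) →
      Real.sqrt ((N:ℝ) / 6) * ℓ ^ ((5:ℝ)/2) < (K:ℝ) ∧
      (K:ℝ) < Real.sqrt (6 * (N:ℝ)) * ℓ ^ ((5:ℝ)/2)) := by
  classical
  have hNR : (3:ℝ) ≤ (N:ℝ) := by exact_mod_cast hN
  have hl0 : (0:ℝ) < ℓ := by linarith
  have hlog0 : 0 ≤ Real.log ℓ := Real.log_nonneg h1
  set s := Real.sqrt (6 * (N:ℝ)) with hs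
  set t := Real.sqrt ((N:ℝ) / 6) with ht
  set A := ℓ ^ ((5:ℝ)/2) with hA
  set L := ⌈s * A⌉₊ with hL
  set T := (ℓ ^ 4)⁻¹ with hT
  set E := ℓ * (-(((N:ℝ) + 1) / 2)) + 300 * Real.log ℓ with hE
  have hs0 : (0:ℝ) ≤ s := Real.sqrt_nonneg _
  have ht0 : (0:ℝ) ≤ t := Real.sqrt_nonneg _
  have hA0 : (0:ℝ) ≤ A := Real.rpow_nonneg hl0.le _
  have hA1 : (1:ℝ) ≤ A := by
    have := Real.rpow_le_rpow_of_exponent_le h1 (show (0:ℝ) ≤ (5:ℝ)/2 by norm_num)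
    rwa [Real.rpow_zero] at this
  have hs4 : (4:ℝ) ≤ s := by
    rw [hs, show (4:ℝ) = Real.sqrt 16 by
      rw [show (16:ℝ) = 4^2 by norm_num, Real.sqrt_sq (by norm_num : (0:ℝ) ≤ 4)]]
    exact Real.sqrt_le_sqrt (by linarith)
  have hts : t ≤ s := Real.sqrt_le_sqrt (by linarith [Nat.cast_nonneg (α := ℝ) N])
  have hT0 : (0:ℝ) < T := by positivity
  have hTl4 : T * ℓ ^ 4 = 1 := by rw [hT]; field_simp
  have hAA : A * A = ℓ ^ (5:ℕ) := by
    rw [hA, ← Real.rpow_natCast ℓ 5, ← Real.rpow_add hl0]; norm_num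
  have hl5T : ℓ ^ (5:ℕ) * T = ℓ := by
    rw [hT]; field_simp
  have hss : s * s = 6 * (N:ℝ) := Real.mul_self_sqrt (by positivity)
  have htt : t * t = (N:ℝ) / 6 := Real.mul_self_sqrt (by positivity)
  have hL_lb : s * A ≤ (L:ℝ) := Nat.le_ceil _
  have hL_ub : (L:ℝ) < s * A + 1 := by
    exact_mod_cast Nat.ceil_lt_add_one (mul_nonneg hs0 hA0)
  have h4L : 4 * (L:ℝ) ≤ ℓ ^ 4 := by linarith
  have hsAT : s * A * T ≤ 1/4 := by
    have e := mul_le_mul_of_nonneg_right h4 hT0.le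
    nlinarith [hT0.le]
  -- each factor is positive and Pu j ≤ 1/2
  have hfac_pos : ∀ j : ℕ, 1 ≤ j → j ≤ L → 0 < 1 - Pu j := by
    intro j hj1 hjL
    have := (hP j hj1 hjL).2.2.1
    linarith
  have hPu_half : ∀ j : ℕ, 1 ≤ j → j ≤ L → 0 ≤ Pu j ∧ Pu j ≤ 1/2 := by
    intro j hj1 hjL
    obtain ⟨hPl0, hPlu, _, _, hhi⟩ := hP j hj1 hjL
    refine ⟨by linarith, ?_⟩
    have hjL' : (j:ℝ) ≤ (L:ℝ) := Nat.cast_le.mpr hjL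
    have ha : (j:ℝ) * T ≤ (L:ℝ) * T := mul_le_mul_of_nonneg_right hjL' hT0.le
    have hb : 4 * (L:ℝ) * T ≤ 1 := by
      have := mul_le_mul_of_nonneg_right h4L hT0.le
      nlinarith [hTl4]
    linarith
  -- sum bounds
  have hsum_lo : ∀ i : ℕ, i ≤ L → T * (i:ℝ)^2 / 4 ≤ ∑ j ∈ Finset.Icc 1 i, Pl j := by
    intro i hiL
    have hle : ∑ j ∈ Finset.Icc 1 i, (1/2 * (j:ℝ) * T) ≤ ∑ j ∈ Finset.Icc 1 i, Pl j := by
      apply Finset.sum_le_sum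
      intro j hj
      rw [Finset.mem_Icc] at hj
      exact (hP j hj.1 (le_trans hj.2 hiL)).2.2.2.1
    refine le_trans ?_ hle
    have heq : ∑ j ∈ Finset.Icc 1 i, (1/2 * (j:ℝ) * T)
        = (∑ j ∈ Finset.Icc 1 i, (j:ℝ)) * (T/2) := by
      rw [Finset.sum_mul]
      exact Finset.sum_congr rfl (fun j _ => by ring)
    rw [heq, gauss_Icc]
    have hi0 : (0:ℝ) ≤ (i:ℝ) := Nat.cast_nonneg i
    linarith [mul_nonneg hT0.le hi0]
  have hsum_hi : ∀ i : ℕ, i ≤ L → ∑ j ∈ Finset.Icc 1 i, Pu j ≤ T * (i:ℝ) * ((i:ℝ)+1) := by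
    intro i hiL
    have hle : ∑ j ∈ Finset.Icc 1 i, Pu j ≤ ∑ j ∈ Finset.Icc 1 i, (2 * (j:ℝ) * T) := by
      apply Finset.sum_le_sum
      intro j hj
      rw [Finset.mem_Icc] at hj
      exact (hP j hj.1 (le_trans hj.2 hiL)).2.2.2.2
    refine le_trans hle ?_
    have heq : ∑ j ∈ Finset.Icc 1 i, (2 * (j:ℝ) * T)
        = (∑ j ∈ Finset.Icc 1 i, (j:ℝ)) * (2*T) := by
      rw [Finset.sum_mul]
      exact Finset.sum_congr rfl (fun j _ => by ring)
    rw [heq, gauss_Icc]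
    exact le_of_eq (by ring)
  -- product bounds
  have hB_pos : ∀ i : ℕ, i ≤ L → 0 < nibbleB Pu i := by
    intro i hiL
    simp only [nibbleB]
    apply Finset.prod_pos
    intro j hj
    rw [Finset.mem_Icc] at hj
    exact hfac_pos j hj.1 (le_trans hj.2 hiL)
  have hUB : ∀ i : ℕ, i ≤ L → nibbleB Pu i ≤ Real.exp (-(T * (i:ℝ)^2 / 4)) := by
    intro i hiL
    have step : nibbleB Pu i ≤ ∏ j ∈ Finset.Icc 1 i, Real.exp (-(Pl j)) := by
      simp only [nibbleB]
      apply Finset.prod_le_prod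
      · intro j hj
        rw [Finset.mem_Icc] at hj
        exact (hfac_pos j hj.1 (le_trans hj.2 hiL)).le
      · intro j hj
        rw [Finset.mem_Icc] at hj
        obtain ⟨hPl0, hPlu, hPu1, _, _⟩ := hP j hj.1 (le_trans hj.2 hiL)
        have := Real.add_one_le_exp (-(Pl j))
        linarith
    rw [← Real.exp_sum] at step
    refine le_trans step (Real.exp_le_exp.mpr ?_)
    have h := hsum_lo i hiL
    have heq : ∑ j ∈ Finset.Icc 1 i, -(Pl j) = -(∑ j ∈ Finset.Icc 1 i, Pl j) := by
      rw [← Finset.sum_neg_distrib]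
    rw [heq]
    linarith
  have hLB : ∀ i : ℕ, i ≤ L → Real.exp (-(2 * T * (i:ℝ) * ((i:ℝ)+1))) ≤ nibbleB Pu i := by
    intro i hiL
    have step : ∏ j ∈ Finset.Icc 1 i, Real.exp (-(2 * Pu j)) ≤ nibbleB Pu i := by
      simp only [nibbleB]
      apply Finset.prod_le_prod
      · intro j _; positivity
      · intro j hj
        rw [Finset.mem_Icc] at hj
        obtain ⟨h0, hhalf⟩ := hPu_half j hj.1 (le_trans hj.2 hiL)
        exact exp_neg_two_le _ h0 hhalf
    refine le_trans ?_ step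
    rw [← Real.exp_sum]
    apply Real.exp_le_exp.mpr
    have h := hsum_hi i hiL
    have heq : ∑ j ∈ Finset.Icc 1 i, -(2 * Pu j)
        = -(2 * ∑ j ∈ Finset.Icc 1 i, Pu j) := by
      rw [Finset.mul_sum, ← Finset.sum_neg_distrib]
    rw [heq]
    linarith
  -- b L is below threshold
  have hbL : nibbleB Pu L ≤ Real.exp E := by
    refine le_trans (hUB L le_rfl) (Real.exp_le_exp.mpr ?_)
    have hL2 : 6 * (N:ℝ) * ℓ ^ (5:ℕ) ≤ (L:ℝ)^2 := by
      have hmm := mul_self_le_mul_self (mul_nonneg hs0 hA0) hL_lb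
      calc 6 * (N:ℝ) * ℓ ^ (5:ℕ) = (s*A) * (s*A) := by rw [← hss, ← hAA]; ring
      _ ≤ (L:ℝ) * (L:ℝ) := hmm
      _ = (L:ℝ)^2 := (sq (L:ℝ)).symm
    have key1 : 3 * (N:ℝ) / 2 * ℓ ≤ T * (L:ℝ)^2 / 4 := by
      have e := mul_le_mul_of_nonneg_left hL2 hT0.le
      nlinarith [hl5T]
    rw [hE]
    nlinarith [hlog0, mul_nonneg (show (0:ℝ) ≤ 2*(N:ℝ)-1 by linarith) hl0.le, key1]
  have hb0 : nibbleB Pu 0 = 1 := by simp [nibbleB]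
  have hE0 : Real.exp E < 1 := by
    rw [← Real.exp_zero]
    apply Real.exp_lt_exp.mpr
    rw [hE]
    nlinarith [hlog0, mul_nonneg (show (0:ℝ) ≤ (N:ℝ)-3 by linarith) hl0.le]
  constructor
  · -- existence
    have hexists : ∃ k : ℕ, nibbleB Pu k ≤ Real.exp E := ⟨L, hbL⟩
    refine ⟨Nat.find hexists, ?_, Nat.find_le hbL, Nat.find_spec hexists, ?_⟩
    · rcases Nat.eq_zero_or_pos (Nat.find hexists) with h | h
      · exfalso
        have hsp := Nat.find_spec hexists
        rw [h, hb0] at hsp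
        linarith
      · exact h
    · have h1K : 1 ≤ Nat.find hexists := by
        rcases Nat.eq_zero_or_pos (Nat.find hexists) with h | h
        · exfalso
          have hsp := Nat.find_spec hexists
          rw [h, hb0] at hsp
          linarith
        · exact h
      have := Nat.find_min hexists (show Nat.find hexists - 1 < Nat.find hexists from
        Nat.sub_lt h1K one_pos)
      exact lt_of_not_ge this
  · -- bounds for any valid K
    intro K hK1 hKL hKb hKb'
    constructor
    · -- lower bound
      by_contra hcon
      push_neg at hcon
      have step := hLB K hKL
      have hle := Real.exp_le_exp.mp (le_trans step hKb)
      have hK0 : (0:ℝ) ≤ (K:ℝ) := Nat.cast_nonneg K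
      have hKK : (K:ℝ) * ((K:ℝ)+1) ≤ (t*A) * ((t*A)+1) := by
        nlinarith [mul_nonneg (sub_nonneg.mpr hcon) (show (0:ℝ) ≤ t*A + (K:ℝ) + 1 by
          nlinarith [mul_nonneg ht0 hA0])]
      have htAT : t * A * T ≤ 1/4 :=
        le_trans (mul_le_mul_of_nonneg_right
          (mul_le_mul_of_nonneg_right hts hA0) hT0.le) hsAT
      have hid2 : 2 * T * ((t*A) * ((t*A)+1)) = (N:ℝ)/3 * ℓ + 2 * (t*A*T) := by
        have hre : 2 * T * ((t*A) * ((t*A)+1))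
            = 2 * ((t*t) * ((A*A) * T)) + 2 * (t*A*T) := by ring
        rw [hre, htt, hAA, hl5T]; ring
      have e2 := mul_le_mul_of_nonneg_left hKK (by positivity : (0:ℝ) ≤ 2*T)
      rw [hE] at hle
      nlinarith [hlog0, mul_nonneg (show (0:ℝ) ≤ (N:ℝ)-3 by linarith) hl0.le, e2, hid2, htAT]
    · -- upper bound
      by_contra hcon
      push_neg at hcon
      have hK1L : K - 1 ≤ L := le_trans (Nat.sub_le K 1) hKL
      have step := hUB (K-1) hK1L
      have hcast : ((K-1:ℕ):ℝ) = (K:ℝ) - 1 := by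
        rw [Nat.cast_sub hK1, Nat.cast_one]
      rw [hcast] at step
      have hlt := Real.exp_lt_exp.mp (lt_of_lt_of_le hKb' step)
      have hsA1 : (1:ℝ) ≤ s * A := by nlinarith
      have hsq2 : (s*A-1) * (s*A-1) ≤ ((K:ℝ)-1) * ((K:ℝ)-1) :=
        mul_self_le_mul_self (by linarith) (by linarith)
      have hid : T * ((s*A-1) * (s*A-1)) = 6*(N:ℝ)*ℓ - 2*(s*A*T) + T := by
        have hre : T * ((s*A-1) * (s*A-1))
            = (s*s) * ((A*A) * T) - 2*(s*A*T) + T := by ring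
        rw [hre, hss, hAA, hl5T]
      have e1 := mul_le_mul_of_nonneg_left hsq2 hT0.le
      have hsqK : ((K:ℝ)-1)^2 = ((K:ℝ)-1) * ((K:ℝ)-1) := sq _
      have h14 : (1:ℝ) ≤ ℓ^4 := one_le_pow₀ h1
      have hTle1 : T ≤ 1 := by rw [hT]; exact inv_le_one_of_one_le₀ h14
      have hTK : 3*(N:ℝ)/2*ℓ - 1 ≤ T * ((K:ℝ)-1)^2 / 4 := by
        rw [hsqK]
        linarith [e1, hid, hsAT, hT0.le]
      rw [hE] at hlt
      linarith [hlog0, mul_nonneg (show (0:ℝ) ≤ (N:ℝ)-3 by linarith) hl0.le, hTK, hlt, h1]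

/-- The number of steps of the nibble algorithm: there is a first index `K` at which `b_K`
drops below the threshold, and any such `K` is `Θ((log q)^{5/2})` with explicit constants. -/
theorem nibble_number_of_steps (N : ℕ) (hN : 3 ≤ N) :
    ∃ M : ℝ, ∀ q : ℝ, M ≤ q →
      ∀ Pl Pu : ℕ → ℝ,
        (∀ i : ℕ, 1 ≤ i → i ≤ nibbleL N q →
          0 ≤ Pl i ∧ Pl i ≤ Pu i ∧ Pu i < 1 ∧
          (1 / 2) * (i : ℝ) * nibbleTheta q ^ 2 ≤ Pl i ∧
          Pu i ≤ 2 * (i : ℝ) * nibbleTheta q ^ 2) →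
        (∃ K : ℕ, 1 ≤ K ∧ K ≤ nibbleL N q ∧
          nibbleB Pu K ≤ nibbleThr N q ∧ nibbleThr N q < nibbleB Pu (K - 1)) ∧
        (∀ K : ℕ, 1 ≤ K → K ≤ nibbleL N q →
          nibbleB Pu K ≤ nibbleThr N q → nibbleThr N q < nibbleB Pu (K - 1) →
          Real.sqrt ((N : ℝ) / 6) * Real.log q ^ ((5 : ℝ) / 2) < (K : ℝ) ∧
          (K : ℝ) < Real.sqrt (6 * N) * Real.log q ^ ((5 : ℝ) / 2)) := by
  have e2 : ∀ᶠ r : ℝ in Filter.atTop, 300 * Real.log r + 1 < r := by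
    have h := (Real.isLittleO_log_id_atTop).bound (show (0:ℝ) < 1/600 by norm_num)
    filter_upwards [h, Filter.eventually_ge_atTop (3:ℝ)] with r hr hr3
    have h1 : |Real.log r| ≤ (1/600)*|r| := by simpa [Real.norm_eq_abs] using hr
    have habs : |r| = r := abs_of_nonneg (by linarith)
    have h2 := le_trans (le_abs_self _) h1
    rw [habs] at h2
    linarith
  have e3 : ∀ᶠ r : ℝ in Filter.atTop,
      4 * (Real.sqrt (6*(N:ℝ)) * r ^ ((5:ℝ)/2) + 1) ≤ r ^ 4 := by
    filter_upwards [Filter.eventually_ge_atTop (1:ℝ),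
      Filter.eventually_ge_atTop (8*Real.sqrt (6*(N:ℝ))),
      Filter.eventually_ge_atTop (8:ℝ)] with r h1 hs h8
    have hr0 : (0:ℝ) < r := by linarith
    have hmul : r^((3:ℝ)/2) * r^((5:ℝ)/2) = r^(4:ℕ) := by
      rw [← Real.rpow_natCast r 4, ← Real.rpow_add hr0]; norm_num
    have h32 : r ≤ r^((3:ℝ)/2) := by
      calc r = r^(1:ℝ) := (Real.rpow_one r).symm
      _ ≤ r^((3:ℝ)/2) := Real.rpow_le_rpow_of_exponent_le h1 (by norm_num)
    have h52 : r ≤ r^((5:ℝ)/2) := by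
      calc r = r^(1:ℝ) := (Real.rpow_one r).symm
      _ ≤ r^((5:ℝ)/2) := Real.rpow_le_rpow_of_exponent_le h1 (by norm_num)
    have hA0 : (0:ℝ) ≤ r^((5:ℝ)/2) := Real.rpow_nonneg hr0.le _
    have hs0 : (0:ℝ) ≤ Real.sqrt (6*(N:ℝ)) := Real.sqrt_nonneg _
    have hb : 8*Real.sqrt (6*(N:ℝ))*r^((5:ℝ)/2) ≤ r^((3:ℝ)/2)*r^((5:ℝ)/2) :=
      mul_le_mul_of_nonneg_right (le_trans hs h32) hA0
    have hc : (8:ℝ)*1 ≤ r^((3:ℝ)/2)*r^((5:ℝ)/2) :=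
      mul_le_mul (le_trans h8 h32) (le_trans h1 h52) zero_le_one (le_trans hr0.le h32)
    have hsA : 0 ≤ Real.sqrt (6*(N:ℝ)) * r^((5:ℝ)/2) := mul_nonneg hs0 hA0
    rw [← hmul]
    linarith
  have hevr : ∀ᶠ r : ℝ in Filter.atTop,
      1 ≤ r ∧ (300 * Real.log r + 1 < r) ∧
      4 * (Real.sqrt (6*(N:ℝ)) * r ^ ((5:ℝ)/2) + 1) ≤ r ^ 4 :=
    (Filter.eventually_ge_atTop 1).and (e2.and e3)
  have hevq := (Filter.eventually_ge_atTop (1:ℝ)).and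
    (Real.tendsto_log_atTop.eventually hevr)
  obtain ⟨M, hM⟩ := Filter.eventually_atTop.mp hevq
  refine ⟨M, fun q hq Pl Pu hP => ?_⟩
  obtain ⟨hq1, h1, h2, h4⟩ := hM q hq
  have hq0 : (0:ℝ) < q := by linarith
  have hl0 : (0:ℝ) < Real.log q := by linarith
  have hθT : nibbleTheta q ^ 2 = (Real.log q ^ 4)⁻¹ := by
    simp only [nibbleTheta]
    rw [inv_pow, ← pow_mul]
  have hthr : nibbleThr N q
      = Real.exp (Real.log q * (-(((N:ℝ)+1)/2)) + 300 * Real.log (Real.log q)) := by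
    have h300 : Real.log q ^ (300:ℕ) = Real.exp (300 * Real.log (Real.log q)) := by
      rw [show (300:ℝ) * Real.log (Real.log q)
          = ((300:ℕ):ℝ) * Real.log (Real.log q) by norm_num,
        Real.exp_nat_mul, Real.exp_log hl0]
    simp only [nibbleThr]
    rw [Real.rpow_def_of_pos hq0, h300, ← Real.exp_add]
  have hP' : ∀ i : ℕ, 1 ≤ i → i ≤ ⌈Real.sqrt (6 * (N:ℝ)) * Real.log q ^ ((5:ℝ)/2)⌉₊ →
      0 ≤ Pl i ∧ Pl i ≤ Pu i ∧ Pu i < 1 ∧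
      1 / 2 * (i:ℝ) * (Real.log q ^ 4)⁻¹ ≤ Pl i ∧
      Pu i ≤ 2 * (i:ℝ) * (Real.log q ^ 4)⁻¹ := by
    intro i hi hiL
    have h := hP i hi hiL
    rwa [hθT] at h
  rw [show nibbleL N q = ⌈Real.sqrt (6 * (N:ℝ)) * Real.log q ^ ((5:ℝ)/2)⌉₊ from rfl, hthr]
  exact nibble_key N hN (Real.log q) Pl Pu h1 h2 h4 hP'
end
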